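/- Let J ⊂ K[x_1,...,x_n] be a stable monomial ideal. Then the number of terms in the sous-escalier N(J) that lie in the colon ideal (J : x_n) equals the number of minimal monomial generators of J that are divisible by x_n. Precisely, |N(J) ∩ (J : x_n)| = |{τ ∈ B_J : x_n divides τ}|, where B_J is the minimal monomial basis of J and N(J) is the set of monomials not in J. -/

import Mathlib

open Finset

/-- Total degree of a monomial (exponent vector). -/
def mdeg {n : ℕ} (α : Fin n →₀ ℕ) : ℕ := α.sum fun _ e => e

/-- A set of exponent vectors is the set of monomials of a monomial ideal. -/
def IsMonIdeal {n : ℕ} (S : Set (Fin n →₀ ℕ)) : Prop :=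
  ∀ α ∈ S, ∀ β : Fin n →₀ ℕ, α + β ∈ S

/-- `α` is a minimal monomial generator of the monomial ideal with monomials `S`. -/
def MinGen {n : ℕ} (S : Set (Fin n →₀ ℕ)) (α : Fin n →₀ ℕ) : Prop :=
  α ∈ S ∧ ∀ β ∈ S, β ≤ α → β = α

/-- Stable monomial ideal (variables ordered `x_1 ≻ ⋯ ≻ x_n`, i.e. index `0` largest). -/
def IsStable {n : ℕ} (S : Set (Fin n →₀ ℕ)) : Prop :=
  ∀ α ∈ S, ∀ m ∈ α.support, (∀ k ∈ α.support, k ≤ m) →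
    ∀ i : Fin n, i < m → α - Finsupp.single m 1 + Finsupp.single i 1 ∈ S

def IsStronglyStable {n : ℕ} (S : Set (Fin n →₀ ℕ)) : Prop :=
  ∀ α ∈ S, ∀ i ∈ α.support, ∀ j : Fin n, j < i →
    α - Finsupp.single i 1 + Finsupp.single j 1 ∈ S

/-- `drlLT α β` : `α` is smaller than `β` in degrevlex with `x_1 ≻ ⋯ ≻ x_n`. -/
def drlLT {n : ℕ} (α β : Fin n →₀ ℕ) : Prop :=
  mdeg α < mdeg β ∨ (mdeg α = mdeg β ∧ ∃ i : Fin n, β i < α i ∧ ∀ j : Fin n, i < j → α j = β j)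

def IsAlmostRevLex {n : ℕ} (S : Set (Fin n →₀ ℕ)) : Prop :=
  IsMonIdeal S ∧ ∀ α, MinGen S α → ∀ β : Fin n →₀ ℕ, mdeg β = mdeg α → drlLT α β → β ∈ S

/-- Combinatorial Hilbert function of `R/J`: number of degree-`t` monomials outside `S`. -/
noncomputable def hilbC {n : ℕ} (S : Set (Fin n →₀ ℕ)) (t : ℕ) : ℕ :=
  {α : Fin n →₀ ℕ | mdeg α = t ∧ α ∉ S}.ncard

/-- `fdiff H s t` is `Δ^s H (t)` with the convention `Δ^s H (0) = 1` for `s ≥ 1`. -/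
def fdiff (H : ℕ → ℕ) : ℕ → ℕ → ℤ
  | 0, t => H t
  | _+1, 0 => 1
  | s+1, t+1 => fdiff H s (t+1) - fdiff H s t

/-- For a stable monomial ideal `J` (in `n+1` variables `x_1 ≻ ⋯ ≻ x_{n+1}`), the number of
monomials in the sous-escalier `N(J)` lying in `(J : x_{n+1})` equals the number of minimal
generators of `J` divisible by the last variable. -/

theorem ncard_sousEscalier_colon_eq_ncard_minGen_divisible {n : ℕ}
    (S : Set (Fin (n + 1) →₀ ℕ)) (hmon : IsMonIdeal S) (hS : IsStable S) :
    {β : Fin (n + 1) →₀ ℕ | β ∉ S ∧ β + Finsupp.single (Fin.last n) 1 ∈ S}.ncard =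
      {α : Fin (n + 1) →₀ ℕ | MinGen S α ∧ α (Fin.last n) ≠ 0}.ncard := by
  set e : Fin (n + 1) →₀ ℕ := Finsupp.single (Fin.last n) 1 with he
  have hinj : Function.Injective (fun β : Fin (n + 1) →₀ ℕ => β + e) := by
    intro a b h
    simpa using h
  have hdvd : ∀ γ β : Fin (n + 1) →₀ ℕ, γ ∈ S → γ ≤ β → β ∈ S := by
    intro γ β hγ hle
    have := hmon γ hγ (β - γ)
    rwa [add_tsub_cancel_of_le hle] at this
  have key : {α : Fin (n + 1) →₀ ℕ | MinGen S α ∧ α (Fin.last n) ≠ 0} =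
      (fun β : Fin (n + 1) →₀ ℕ => β + e) ''
        {β : Fin (n + 1) →₀ ℕ | β ∉ S ∧ β + e ∈ S} := by
    ext α
    constructor
    · rintro ⟨⟨hαS, hmin⟩, hlast⟩
      have hea : e ≤ α := by
        rw [he, Finsupp.single_le_iff]
        omega
      have hsub : α - e + e = α := tsub_add_cancel_of_le hea
      refine ⟨α - e, ⟨?_, by rwa [hsub]⟩, hsub⟩
      intro hmem
      have h1 : α - e ≤ α := tsub_le_self
      have h2 := hmin _ hmem h1
      have : (α - e) (Fin.last n) = α (Fin.last n) := by rw [h2]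
      rw [Finsupp.tsub_apply, he, Finsupp.single_eq_same] at this
      omega
    · rintro ⟨β, ⟨hβ, hβe⟩, rfl⟩
      refine ⟨⟨hβe, ?_⟩, ?_⟩
      · intro γ hγ hle
        by_contra hne
        -- γ ≤ β is impossible
        have hnleβ : ¬ γ ≤ β := fun h => hβ (hdvd γ β hγ h)
        have hlast : γ (Fin.last n) = β (Fin.last n) + 1 := by
          by_contra hc
          apply hnleβ
          intro k
          have hk := hle k
          rw [Finsupp.add_apply] at hk
          by_cases hkl : k = Fin.last n
          · subst hkl
            rw [he, Finsupp.single_eq_same] at hk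
            omega
          · rw [he, Finsupp.single_eq_of_ne' (Ne.symm hkl)] at hk
            omega
        -- find coordinate i ≠ last where γ i < (β+e) i
        have hex : ∃ i : Fin (n + 1), i ≠ Fin.last n ∧ γ i < β i := by
          by_contra hc
          push_neg at hc
          apply hne
          ext k
          by_cases hkl : k = Fin.last n
          · subst hkl
            rw [Finsupp.add_apply, he, Finsupp.single_eq_same]
            omega
          · have h1 := hc k hkl
            have h2 := hle k
            rw [Finsupp.add_apply, he, Finsupp.single_eq_of_ne' (Ne.symm hkl)] at h2 ⊢
            omega
        obtain ⟨i, hiℓ, hilt⟩ := hex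
        have hilt' : i < Fin.last n := lt_of_le_of_ne (Fin.le_last i) hiℓ
        have hmem : Fin.last n ∈ γ.support := by
          rw [Finsupp.mem_support_iff]
          omega
        have hγ' := hS γ hγ (Fin.last n) hmem (fun k _ => Fin.le_last k) i hilt'
        apply hβ
        apply hdvd _ _ hγ'
        intro k
        rw [Finsupp.add_apply, Finsupp.tsub_apply]
        by_cases hkl : k = Fin.last n
        · subst hkl
          rw [Finsupp.single_eq_same, Finsupp.single_eq_of_ne' hiℓ]
          omega
        · rw [Finsupp.single_eq_of_ne' (Ne.symm hkl)]
          have h2 := hle k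
          rw [Finsupp.add_apply, he, Finsupp.single_eq_of_ne' (Ne.symm hkl)] at h2
          by_cases hki : k = i
          · subst hki
            rw [Finsupp.single_eq_same]
            omega
          · rw [Finsupp.single_eq_of_ne' (Ne.symm hki)]
            omega
      · rw [Finsupp.add_apply, he, Finsupp.single_eq_same]
        omega
  rw [key, Set.ncard_image_of_injective _ hinj]
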